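/- arXiv:2103.15651 — 2 statements merged into one kernel-verified Lean document; each statement's English description precedes it below -/
import Mathlib

section
/- The congruence ∼_A associated with a two-way automaton with state set Q has finite index, bounded by 2^(4|Q|²). -/
/-- A two-way automaton: deterministic transition function giving next state
and a head move in `{-1, 0, +1}`. -/
structure TwoWay (Q A : Type) where
  δ : Q → A → Q × ℤ
  move : ∀ q a, (δ q a).2 = -1 ∨ (δ q a).2 = 0 ∨ (δ q a).2 = 1

/-- One step of the two-way automaton on word `w`; configurations are
(state, position), positions `1..|w|` carry letters, `0` is the left exit,
`|w|+1` the right exit. -/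
def TwoWay.step {Q A : Type} (M : TwoWay Q A) (w : List A) (c c' : Q × ℤ) : Prop :=
  1 ≤ c.2 ∧ ∃ a, w[(c.2 - 1).toNat]? = some a ∧
    c'.1 = (M.δ c.1 a).1 ∧ c'.2 = c.2 + (M.δ c.1 a).2

def TwoWay.reach {Q A : Type} (M : TwoWay Q A) (w : List A) : Q × ℤ → Q × ℤ → Prop :=
  Relation.ReflTransGen (M.step w)

/-- Left-to-left behavior: runs starting at the first position and leaving on the left. -/
def TwoWay.bhLL {Q A : Type} (M : TwoWay Q A) (w : List A) : Set (Q × Q) :=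
  {pq | M.reach w (pq.1, 1) (pq.2, 0)}

/-- Left-to-right behavior. -/
def TwoWay.bhLR {Q A : Type} (M : TwoWay Q A) (w : List A) : Set (Q × Q) :=
  {pq | M.reach w (pq.1, 1) (pq.2, (w.length : ℤ) + 1)}

/-- Right-to-left behavior. -/
def TwoWay.bhRL {Q A : Type} (M : TwoWay Q A) (w : List A) : Set (Q × Q) :=
  {pq | M.reach w (pq.1, (w.length : ℤ)) (pq.2, 0)}

/-- Right-to-right behavior. -/
def TwoWay.bhRR {Q A : Type} (M : TwoWay Q A) (w : List A) : Set (Q × Q) :=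
  {pq | M.reach w (pq.1, (w.length : ℤ)) (pq.2, (w.length : ℤ) + 1)}

/-- `u ∼_A v`: all four behaviors coincide. -/
def TwoWay.equiv {Q A : Type} (M : TwoWay Q A) (u v : List A) : Prop :=
  M.bhLL u = M.bhLL v ∧ M.bhLR u = M.bhLR v ∧ M.bhRL u = M.bhRL v ∧ M.bhRR u = M.bhRR v

/-- The setoid given by `∼_A`. -/
def TwoWay.setoid {Q A : Type} (M : TwoWay Q A) : Setoid (List A) :=
  ⟨M.equiv,
   ⟨fun _ => ⟨rfl, rfl, rfl, rfl⟩,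
    fun h => ⟨h.1.symm, h.2.1.symm, h.2.2.1.symm, h.2.2.2.symm⟩,
    fun h h' => ⟨h.1.trans h'.1, h.2.1.trans h'.2.1, h.2.2.1.trans h'.2.2.1,
      h.2.2.2.trans h'.2.2.2⟩⟩⟩

/-- `∼_A` has finite index, bounded by `2 ^ (4 |Q|²)`. -/
theorem stmt_1 {Q A : Type} [Fintype Q] (M : TwoWay Q A) :
    Finite (Quotient M.setoid) ∧
      Nat.card (Quotient M.setoid) ≤ 2 ^ (4 * Fintype.card Q ^ 2) := by
  classical
  set T := Set (Q × Q) × Set (Q × Q) × Set (Q × Q) × Set (Q × Q)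
  have hf : ∃ f : Quotient M.setoid → T, Function.Injective f := by
    refine ⟨Quotient.lift (fun w => (M.bhLL w, M.bhLR w, M.bhRL w, M.bhRR w)) ?_, ?_⟩
    · rintro u v ⟨h1, h2, h3, h4⟩
      simp only [h1, h2, h3, h4]
    · rintro ⟨u⟩ ⟨v⟩ h
      have h' : (M.bhLL u, M.bhLR u, M.bhRL u, M.bhRR u)
          = (M.bhLL v, M.bhLR v, M.bhRL v, M.bhRR v) := h
      simp only [Prod.mk.injEq] at h'
      exact Quotient.sound ⟨h'.1, h'.2.1, h'.2.2.1, h'.2.2.2⟩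
  obtain ⟨f, hf⟩ := hf
  have hfin : Finite (Quotient M.setoid) := Finite.of_injective f hf
  refine ⟨hfin, ?_⟩
  have := Nat.card_le_card_of_injective f hf
  refine this.trans ?_
  have hcard : Nat.card T = (2 ^ (Fintype.card Q ^ 2)) ^ 4 := by
    rw [Nat.card_eq_fintype_card]
    simp only [T, Fintype.card_prod, Fintype.card_set, sq]
    ring
  rw [hcard, ← pow_mul]
  ring_nf
  exact le_refl _
end

section
/- For any two-way automaton and any words u, v, the left-to-right behavior of the concatenation satisfies bh_ℓr(uv) = bh_ℓr(u) ∘ (bh_ℓℓ(v) ∘ bh_rr(u))* ∘ bh_ℓr(v), where ∘ denotes relational composition and * the reflexive-transitive closure of a relation on states. -/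
/-- Relational composition (first `R`, then `S`). -/
def rcomp {Q : Type} (R S : Set (Q × Q)) : Set (Q × Q) :=
  {pq | ∃ r, (pq.1, r) ∈ R ∧ (r, pq.2) ∈ S}

/-- Reflexive-transitive closure of a relation on states. -/
def rstar {Q : Type} (R : Set (Q × Q)) : Set (Q × Q) :=
  {pq | Relation.ReflTransGen (fun a b => (a, b) ∈ R) pq.1 pq.2}

namespace TwoWayAux

variable {Q A : Type} (M : TwoWay Q A)

/-- A step in `u` is a step in `u ++ v`. -/
lemma step_append_left {u v : List A} {c c' : Q × ℤ} (h : M.step u c c') :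
    M.step (u ++ v) c c' := by
  obtain ⟨h1, a, ha, h2, h3⟩ := h
  refine ⟨h1, a, ?_, h2, h3⟩
  rw [List.getElem?_append_left (List.getElem?_eq_some_iff.mp ha).1]
  exact ha

lemma reach_append_left {u v : List A} {c c' : Q × ℤ} (h : M.reach u c c') :
    M.reach (u ++ v) c c' :=
  Relation.ReflTransGen.mono (fun _ _ hs => step_append_left M hs) _ _ h

/-- A step in `v` shifted by `|u|` is a step in `u ++ v`. -/
lemma step_shift {u v : List A} {c c' : Q × ℤ} (h : M.step v c c') :
    M.step (u ++ v) (c.1, c.2 + u.length) (c'.1, c'.2 + u.length) := by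
  obtain ⟨h1, a, ha, h2, h3⟩ := h
  refine ⟨by simp; omega, a, ?_, h2, by simp; omega⟩
  have hidx : ((c.2 + u.length : ℤ) - 1).toNat = (c.2 - 1).toNat + u.length := by omega
  simp only [hidx]
  rw [List.getElem?_append_right (by omega)]
  simpa using ha

lemma reach_shift {u v : List A} {c c' : Q × ℤ} (h : M.reach v c c') :
    M.reach (u ++ v) (c.1, c.2 + u.length) (c'.1, c'.2 + u.length) := by
  induction h with
  | refl => exact Relation.ReflTransGen.refl
  | tail _ hs ih => exact ih.tail (step_shift M hs)

lemma reach_shift' {u v : List A} {p q : Q} {i j i' j' : ℤ}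
    (h : M.reach v (p, i) (q, j)) (hi : i' = i + u.length) (hj : j' = j + u.length) :
    M.reach (u ++ v) (p, i') (q, j') := by
  subst hi; subst hj; exact reach_shift M h

/-- A step in `u ++ v` starting in the `u` part is a step in `u`. -/
lemma step_unappend_left {u v : List A} {c c' : Q × ℤ} (h : M.step (u ++ v) c c')
    (hc : c.2 ≤ u.length) : M.step u c c' := by
  obtain ⟨h1, a, ha, h2, h3⟩ := h
  refine ⟨h1, a, ?_, h2, h3⟩
  rwa [List.getElem?_append_left (by omega)] at ha

/-- A step in `u ++ v` starting in the `v` part is a (shifted) step in `v`. -/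
lemma step_unappend_right {u v : List A} {c c' : Q × ℤ} (h : M.step (u ++ v) c c')
    (hc : (u.length : ℤ) + 1 ≤ c.2) :
    M.step v (c.1, c.2 - u.length) (c'.1, c'.2 - u.length) := by
  obtain ⟨h1, a, ha, h2, h3⟩ := h
  refine ⟨by simp; omega, a, ?_, h2, by simp; omega⟩
  rw [List.getElem?_append_right (l₂ := v) (by omega)] at ha
  have hidx : ((c.2 - u.length : ℤ) - 1).toNat = (c.2 - 1).toNat - u.length := by omega
  rw [hidx]
  exact ha

/-- Steps only happen at positions carrying a letter. -/
lemma step_pos_le {w : List A} {c c' : Q × ℤ} (h : M.step w c c') :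
    c.2 ≤ w.length := by
  obtain ⟨h1, a, ha, -, -⟩ := h
  have := (List.getElem?_eq_some_iff.mp ha).1
  omega

/-- The main decomposition lemma (hard direction). -/
lemma decomp {u v : List A} {q : Q} {c : Q × ℤ}
    (h : M.reach (u ++ v) c (q, ((u ++ v).length : ℤ) + 1)) :
    (c = (q, ((u ++ v).length : ℤ) + 1)) ∨
    (1 ≤ c.2 ∧ c.2 ≤ u.length ∧ ∃ r, M.reach u (c.1, c.2) (r, (u.length : ℤ) + 1) ∧
      (r, q) ∈ rcomp (rstar (rcomp (M.bhLL v) (M.bhRR u))) (M.bhLR v)) ∨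
    ((u.length : ℤ) + 1 ≤ c.2 ∧ c.2 ≤ (u.length : ℤ) + v.length ∧
      ((∃ r, M.reach v (c.1, c.2 - u.length) (r, 0) ∧
          (r, q) ∈ rcomp (M.bhRR u)
            (rcomp (rstar (rcomp (M.bhLL v) (M.bhRR u))) (M.bhLR v))) ∨
        M.reach v (c.1, c.2 - u.length) (q, (v.length : ℤ) + 1))) := by
  induction h using Relation.ReflTransGen.head_induction_on with
  | refl => exact Or.inl rfl
  | @head a c hstep hrest ih =>
    obtain ⟨ha1, x, hx, -, -⟩ := id hstep
    have ha2 : a.2 ≤ (u.length : ℤ) + v.length := by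
      have := step_pos_le M hstep
      simpa using this
    have hmove : c.2 = a.2 - 1 ∨ c.2 = a.2 ∨ c.2 = a.2 + 1 := by
      obtain ⟨-, b, -, -, h3⟩ := id hstep
      rcases M.move a.1 b with h | h | h <;> omega
    by_cases hcase : a.2 ≤ (u.length : ℤ)
    · -- a in the u part
      have hsu : M.step u a c := step_unappend_left M hstep hcase
      rcases ih with h0 | ⟨hc1, hc2, r, hru, hT⟩ | ⟨hc1, hc2, hv⟩
      · -- c is the target; forces v = [] at the relevant level
        have hcpos : c.2 = (u.length : ℤ) + v.length + 1 := by
          rw [h0]; simp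
        have hm : (v.length : ℤ) = 0 := by omega
        refine Or.inr (Or.inl ⟨ha1, hcase, q, ?_, ?_⟩)
        · have hlen : ((u ++ v).length : ℤ) + 1 = (u.length : ℤ) + 1 := by
            simp only [List.length_append, Nat.cast_add]; omega
          have hc : c = (q, (u.length : ℤ) + 1) := by rw [h0, hlen]
          rw [← hc]
          exact Relation.ReflTransGen.single hsu
        · refine ⟨q, Relation.ReflTransGen.refl, ?_⟩
          show M.reach v (q, 1) (q, (v.length : ℤ) + 1)
          have h1 : ((v.length : ℤ)) + 1 = 1 := by omega
          rw [h1]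
          exact Relation.ReflTransGen.refl
      · refine Or.inr (Or.inl ⟨ha1, hcase, r, ?_, hT⟩)
        exact Relation.ReflTransGen.head hsu hru
      · -- c is at position u.length + 1 (just across the border)
        have hcpos : c.2 = (u.length : ℤ) + 1 := by omega
        have hcv : c.2 - u.length = 1 := by omega
        have hreachu : M.reach u (a.1, a.2) (c.1, (u.length : ℤ) + 1) := by
          have hc : c = (c.1, (u.length : ℤ) + 1) := Prod.ext rfl hcpos
          rw [← hc]
          exact Relation.ReflTransGen.single hsu
        rcases hv with ⟨r, hrv, s, hs, hT⟩ | hv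
        · rw [hcv] at hrv
          obtain ⟨t, ht1, ht2⟩ := hT
          refine Or.inr (Or.inl ⟨ha1, hcase, c.1, hreachu, t, ?_, ht2⟩)
          exact Relation.ReflTransGen.head
            (show (c.1, s) ∈ rcomp (M.bhLL v) (M.bhRR u) from ⟨r, hrv, hs⟩) ht1
        · rw [hcv] at hv
          exact Or.inr (Or.inl ⟨ha1, hcase, c.1, hreachu,
            c.1, Relation.ReflTransGen.refl, hv⟩)
    · -- a in the v part
      push_neg at hcase
      have hcase' : (u.length : ℤ) + 1 ≤ a.2 := by omega
      have hsv : M.step v (a.1, a.2 - u.length) (c.1, c.2 - u.length) :=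
        step_unappend_right M hstep hcase'
      rcases ih with h0 | ⟨hc1, hc2, r, hru, hT⟩ | ⟨hc1, hc2, hv⟩
      · -- c is the target: exit right of v
        refine Or.inr (Or.inr ⟨hcase', ha2, Or.inr ?_⟩)
        have hlen : ((u ++ v).length : ℤ) + 1 = (v.length : ℤ) + 1 + u.length := by
          simp only [List.length_append, Nat.cast_add]; ring
        have hc : c = (q, (v.length : ℤ) + 1 + u.length) := by rw [h0, hlen]
        rw [hc] at hsv
        have h2 : ((v.length : ℤ) + 1 + u.length) - u.length = (v.length : ℤ) + 1 := by ring
        rw [h2] at hsv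
        exact Relation.ReflTransGen.single hsv
      · -- c back in u: must be at position u.length, exit left of v
        have hcpos : c.2 = (u.length : ℤ) := by omega
        have h0 : c.2 - u.length = 0 := by omega
        rw [h0] at hsv
        refine Or.inr (Or.inr ⟨hcase', ha2, Or.inl ⟨c.1,
          Relation.ReflTransGen.single hsv, r, ?_, hT⟩⟩)
        show M.reach u (c.1, (u.length : ℤ)) (r, (u.length : ℤ) + 1)
        have he : ((c.1, (u.length : ℤ)) : Q × ℤ) = (c.1, c.2) := Prod.ext rfl hcpos.symm
        rw [he]
        exact hru
      · rcases hv with ⟨r, hrv, hT⟩ | hv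
        · exact Or.inr (Or.inr ⟨hcase', ha2, Or.inl ⟨r,
            Relation.ReflTransGen.head hsv hrv, hT⟩⟩)
        · exact Or.inr (Or.inr ⟨hcase', ha2, Or.inr
            (Relation.ReflTransGen.head hsv hv)⟩)

end TwoWayAux

open TwoWayAux in
/-- `bh_ℓr(uv) = bh_ℓr(u) (bh_ℓℓ(v) bh_rr(u))* bh_ℓr(v)`. -/
theorem stmt_2 {Q A : Type} (M : TwoWay Q A) (u v : List A) :
    M.bhLR (u ++ v) =
      rcomp (M.bhLR u) (rcomp (rstar (rcomp (M.bhLL v) (M.bhRR u))) (M.bhLR v)) := by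
  ext ⟨p, q⟩
  constructor
  · intro h
    have h' : M.reach (u ++ v) (p, 1) (q, ((u ++ v).length : ℤ) + 1) := h
    rcases decomp M h' with h0 | ⟨-, -, r, hru, hT⟩ | ⟨h1, -, hv⟩
    · -- whole word empty
      have hp : (1 : ℤ) = ((u ++ v).length : ℤ) + 1 := congrArg Prod.snd h0
      have hq : p = q := congrArg Prod.fst h0
      simp only [List.length_append, Nat.cast_add] at hp
      have hu : (u.length : ℤ) = 0 := by omega
      have hv : (v.length : ℤ) = 0 := by omega
      subst hq
      refine ⟨p, ?_, p, Relation.ReflTransGen.refl, ?_⟩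
      · show M.reach u (p, 1) (p, (u.length : ℤ) + 1)
        rw [hu]; exact Relation.ReflTransGen.refl
      · show M.reach v (p, 1) (p, (v.length : ℤ) + 1)
        rw [hv]; exact Relation.ReflTransGen.refl
    · exact ⟨r, hru, hT⟩
    · -- u must be empty
      have hu : (u.length : ℤ) = 0 := by omega
      rcases hv with ⟨r, hrv, s, hs, -⟩ | hv
      · -- exit left of v: bhRR u is empty since u = []
        exfalso
        -- hs : (r, s) ∈ bhRR u, i.e. reach u (r, |u|) (s, |u|+1) with |u| = 0
        have hrr : M.reach u (r, (u.length : ℤ)) (s, (u.length : ℤ) + 1) := hs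
        rw [hu] at hrr
        cases hrr.cases_head with
        | inl h => exact absurd (congrArg Prod.snd h) (by norm_num)
        | inr h =>
          obtain ⟨d, hd, -⟩ := h
          exact absurd hd.1 (by norm_num)
      · refine ⟨p, ?_, p, Relation.ReflTransGen.refl, ?_⟩
        · show M.reach u (p, 1) (p, (u.length : ℤ) + 1)
          rw [hu]; exact Relation.ReflTransGen.refl
        · show M.reach v (p, 1) (q, (v.length : ℤ) + 1)
          have e : (1 : ℤ) - (u.length : ℤ) = 1 := by omega
          have hv' : M.reach v (p, (1 : ℤ) - u.length) (q, (v.length : ℤ) + 1) := hv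
          rw [e] at hv'
          exact hv'
  · rintro ⟨r, hr, s, hs, hq⟩
    show M.reach (u ++ v) (p, 1) (q, ((u ++ v).length : ℤ) + 1)
    have h1 : M.reach (u ++ v) (p, 1) (r, (u.length : ℤ) + 1) :=
      reach_append_left M hr
    have h2 : ∀ x y : Q, (x, y) ∈ rstar (rcomp (M.bhLL v) (M.bhRR u)) →
        M.reach (u ++ v) (x, (u.length : ℤ) + 1) (y, (u.length : ℤ) + 1) := by
      intro x y hxy
      have hxy' : Relation.ReflTransGen
          (fun a b => (a, b) ∈ rcomp (M.bhLL v) (M.bhRR u)) x y := hxy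
      clear hxy
      induction hxy' using Relation.ReflTransGen.head_induction_on with
      | refl => exact Relation.ReflTransGen.refl
      | @head x' z hstep _ ih =>
        obtain ⟨t, htl, htr⟩ := hstep
        have hA : M.reach (u ++ v) (x', (u.length : ℤ) + 1) (t, (u.length : ℤ)) :=
          reach_shift' M (htl : M.reach v (x', 1) (t, 0)) (by ring) (by ring)
        have hB : M.reach (u ++ v) (t, (u.length : ℤ)) (z, (u.length : ℤ) + 1) :=
          reach_append_left M htr
        exact (hA.trans hB).trans ih
    have h3 : M.reach (u ++ v) (s, (u.length : ℤ) + 1) (q, ((u ++ v).length : ℤ) + 1) :=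
      reach_shift' M (hq : M.reach v (s, 1) (q, (v.length : ℤ) + 1)) (by ring)
        (by simp; ring)
    exact (h1.trans (h2 r s hs)).trans h3
end
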